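/- For b ≥ 3, Σ_{n ≤ x} h_b(n) = (ζ(2b−1)/(2ζ(2b))) x² + O(x) as x → ∞. -/

import Mathlib

noncomputable def ggcd (b r s : ℕ) : ℕ := sSup {d : ℕ | 0 < d ∧ d ^ b ∣ r ∧ d ^ b ∣ s}

noncomputable def hgcd (b n : ℕ) : ℕ := ∑ j ∈ Finset.Icc 1 n, ggcd b j n

open Finset

section GG
variable {b j n : ℕ}

lemma ggcd_bddAbove (hn : 0 < n) (hb : b ≠ 0) :
    BddAbove {d : ℕ | 0 < d ∧ d ^ b ∣ j ∧ d ^ b ∣ n} := by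
  refine ⟨n, fun d hd => ?_⟩
  obtain ⟨hd0, -, hdn⟩ := hd
  exact le_trans (Nat.le_self_pow hb d) (Nat.le_of_dvd hn hdn)

lemma ggcd_mem (hn : 0 < n) (hb : b ≠ 0) :
    0 < ggcd b j n ∧ (ggcd b j n) ^ b ∣ j ∧ (ggcd b j n) ^ b ∣ n := by
  have : ggcd b j n ∈ {d : ℕ | 0 < d ∧ d ^ b ∣ j ∧ d ^ b ∣ n} :=
    Nat.sSup_mem ⟨1, by simp⟩ (ggcd_bddAbove hn hb)
  exact this

-- helper: (lcm a c)^b ∣ m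
lemma lcm_pow_dvd {a c m : ℕ} (hb : b ≠ 0) (ha : 0 < a) (hc : 0 < c) (hm : 0 < m)
    (h1 : a ^ b ∣ m) (h2 : c ^ b ∣ m) : (Nat.lcm a c) ^ b ∣ m := by
  have hl : Nat.lcm a c ≠ 0 := Nat.lcm_ne_zero ha.ne' hc.ne'
  rw [← Nat.factorization_le_iff_dvd (pow_ne_zero _ hl) hm.ne']
  rw [Nat.factorization_pow, Nat.factorization_lcm ha.ne' hc.ne']
  rw [← Nat.factorization_le_iff_dvd (pow_ne_zero _ ha.ne') hm.ne'] at h1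
  rw [← Nat.factorization_le_iff_dvd (pow_ne_zero _ hc.ne') hm.ne'] at h2
  rw [Nat.factorization_pow] at h1 h2
  intro p
  have h1p := h1 p
  have h2p := h2 p
  simp only [Finsupp.smul_apply, Finsupp.sup_apply, smul_eq_mul] at *
  rcases le_total (a.factorization p) (c.factorization p) with h | h
  · rwa [sup_eq_right.mpr h]
  · rwa [sup_eq_left.mpr h]

lemma dvd_ggcd_iff (hn : 0 < n) (hb : b ≠ 0) {d : ℕ} (hd : 0 < d) :
    d ∣ ggcd b j n ↔ (d ^ b ∣ j ∧ d ^ b ∣ n) := by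
  obtain ⟨hM0, hMj, hMn⟩ := ggcd_mem (j := j) hn hb
  constructor
  · intro h
    exact ⟨(pow_dvd_pow_of_dvd h b).trans hMj, (pow_dvd_pow_of_dvd h b).trans hMn⟩
  · rintro ⟨h1, h2⟩
    set M := ggcd b j n with hM
    set l := Nat.lcm d M with hl
    have hl0 : 0 < l := Nat.pos_of_ne_zero (Nat.lcm_ne_zero hd.ne' hM0.ne')
    have hlj : l ^ b ∣ j := by
      rcases Nat.eq_zero_or_pos j with rfl | hj
      · exact dvd_zero _
      · exact lcm_pow_dvd hb hd hM0 hj h1 hMj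
    have hln : l ^ b ∣ n := lcm_pow_dvd hb hd hM0 hn h2 hMn
    have hlle : l ≤ M := le_csSup (ggcd_bddAbove hn hb) ⟨hl0, hlj, hln⟩
    have hMl : M ∣ l := Nat.dvd_lcm_right d M
    have : l = M := le_antisymm hlle (Nat.le_of_dvd hl0 hMl)
    exact this ▸ Nat.dvd_lcm_left d M

lemma ggcd_divisors (hn : 0 < n) (hb : b ≠ 0) :
    (ggcd b j n).divisors = (Finset.Icc 1 n).filter (fun d => d ^ b ∣ j ∧ d ^ b ∣ n) := by
  obtain ⟨hM0, hMj, hMn⟩ := ggcd_mem (j := j) hn hb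
  ext d
  simp only [Nat.mem_divisors, Finset.mem_filter, Finset.mem_Icc]
  constructor
  · rintro ⟨hdM, -⟩
    have hd0 : 0 < d := Nat.pos_of_dvd_of_pos hdM hM0
    have h := (dvd_ggcd_iff hn hb hd0).mp hdM
    refine ⟨⟨hd0, le_trans (Nat.le_self_pow hb d) (Nat.le_of_dvd hn h.2)⟩, h⟩
  · rintro ⟨⟨hd1, -⟩, h⟩
    exact ⟨(dvd_ggcd_iff hn hb hd1).mpr h, hM0.ne'⟩

lemma ggcd_eq_sum (hn : 0 < n) (hb : b ≠ 0) :
    ggcd b j n = ∑ d ∈ (Finset.Icc 1 n).filter (fun d => d ^ b ∣ j ∧ d ^ b ∣ n), d.totient := by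
  rw [← ggcd_divisors hn hb, Nat.sum_totient]

end GG

lemma hgcd_eq (b n : ℕ) (hb : b ≠ 0) :
    hgcd b n = ∑ d ∈ Finset.Icc 1 n, if d ^ b ∣ n then d.totient * (n / d ^ b) else 0 := by
  rcases Nat.eq_zero_or_pos n with rfl | hn
  · simp [hgcd]
  rw [hgcd]
  have h1 : ∀ j ∈ Finset.Icc 1 n, ggcd b j n =
      ∑ d ∈ Finset.Icc 1 n, if d ^ b ∣ j ∧ d ^ b ∣ n then d.totient else 0 := by
    intro j hj
    rw [ggcd_eq_sum hn hb, Finset.sum_filter]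
  rw [Finset.sum_congr rfl h1, Finset.sum_comm]
  refine Finset.sum_congr rfl fun d hd => ?_
  by_cases hdn : d ^ b ∣ n
  · simp only [hdn, and_true, if_true]
    rw [← Finset.sum_filter, Finset.sum_const, smul_eq_mul, mul_comm,
      show Finset.Icc 1 n = Finset.Ioc 0 n from rfl, Nat.Ioc_filter_dvd_card_eq_div]
  · simp [hdn]


lemma summatory_eq (b X : ℕ) (hb : b ≠ 0) :
    ∑ n ∈ Finset.Icc 1 X, hgcd b n =
      ∑ d ∈ Finset.Icc 1 X, d.totient * (∑ m ∈ Finset.Icc 1 (X / d ^ b), m) := by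
  have h1 : ∀ n ∈ Finset.Icc 1 X, hgcd b n =
      ∑ d ∈ Finset.Icc 1 X, if d ^ b ∣ n then d.totient * (n / d ^ b) else 0 := by
    intro n hn
    rw [Finset.mem_Icc] at hn
    rw [hgcd_eq b n hb]
    refine Finset.sum_subset (Finset.Icc_subset_Icc_right hn.2) ?_
    intro d hd hdn
    rw [Finset.mem_Icc] at hd hdn
    push_neg at hdn
    have hnd : n < d := hdn (hd.1)
    rw [if_neg]
    intro hdvd
    have : d ^ b ≤ n := Nat.le_of_dvd (by omega) hdvd
    have : d ≤ d ^ b := Nat.le_self_pow hb d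
    omega
  rw [Finset.sum_congr rfl h1, Finset.sum_comm]
  refine Finset.sum_congr rfl fun d hd => ?_
  rw [Finset.mem_Icc] at hd
  have hdb : 0 < d ^ b := Nat.pow_pos (by omega)
  rw [← Finset.sum_filter, Finset.mul_sum]
  refine Finset.sum_nbij' (fun n => n / d ^ b) (fun m => m * d ^ b) ?_ ?_ ?_ ?_ ?_
  · intro n hn
    simp only [Finset.mem_filter, Finset.mem_Icc] at hn ⊢
    obtain ⟨⟨h1n, h2n⟩, hdvd⟩ := hn
    constructor
    · exact Nat.one_le_div_iff hdb |>.mpr (Nat.le_of_dvd (by omega) hdvd)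
    · exact Nat.div_le_div_right h2n
  · intro m hm
    simp only [Finset.mem_filter, Finset.mem_Icc] at hm ⊢
    obtain ⟨h1m, h2m⟩ := hm
    refine ⟨⟨?_, ?_⟩, dvd_mul_left _ _⟩
    · exact Nat.one_le_iff_ne_zero.mpr (by positivity)
    · calc m * d ^ b ≤ (X / d ^ b) * d ^ b := by exact Nat.mul_le_mul_right _ h2m
        _ ≤ X := Nat.div_mul_le_self X _
  · intro n hn
    simp only [Finset.mem_filter] at hn
    exact Nat.div_mul_cancel hn.2
  · intro m hm
    exact Nat.mul_div_cancel _ hdb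
  · intro n hn
    rfl


open Finset Complex LSeries
open scoped LSeries.notation

lemma summable_phi (b : ℕ) (hb : 3 ≤ b) :
    Summable (fun d : ℕ => (d.totient : ℝ) / (d : ℝ) ^ (2 * b)) := by
  have hsum : Summable (fun d : ℕ => 1 / (d : ℝ) ^ 2) :=
    Real.summable_one_div_nat_pow.mpr one_lt_two
  refine Summable.of_nonneg_of_le (fun d => by positivity) (fun d => ?_) hsum
  rcases Nat.eq_zero_or_pos d with rfl | hd
  · simp
  have hd1 : (1 : ℝ) ≤ (d : ℝ) := by exact_mod_cast hd
  rw [div_le_div_iff₀ (by positivity) (by positivity)]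
  have htot : (d.totient : ℝ) ≤ (d : ℝ) := by exact_mod_cast Nat.totient_le d
  calc (d.totient : ℝ) * (d : ℝ) ^ 2 ≤ (d : ℝ) * (d : ℝ) ^ 2 := by
        apply mul_le_mul_of_nonneg_right htot (by positivity)
    _ = (d : ℝ) ^ 3 := by ring
    _ ≤ (d : ℝ) ^ (2 * b) := pow_le_pow_right₀ hd1 (by omega)
    _ = 1 * (d : ℝ) ^ (2 * b) := by rw [one_mul]

lemma key_zeta (b : ℕ) (hb : 3 ≤ b) :
    riemannZeta (2 * (b : ℂ) - 1) =
      ((∑' d : ℕ, (d.totient : ℝ) / (d : ℝ) ^ (2 * b) : ℝ) : ℂ) * riemannZeta (2 * (b : ℂ)) := by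
  set s : ℂ := 2 * (b : ℂ) with hs_def
  have hsnat : s = ((2 * b : ℕ) : ℂ) := by push_cast; ring
  have h6 : (6 : ℝ) ≤ 2 * (b : ℝ) := by
    have : (3 : ℝ) ≤ (b : ℝ) := by exact_mod_cast hb
    linarith
  have hre : s.re = 2 * (b : ℝ) := by
    simp [hs_def]
  have hs : 1 < s.re := by rw [hre]; linarith
  have hs1 : 1 < (s - 1).re := by
    rw [Complex.sub_re, hre]; norm_num; linarith
  have hφ : LSeriesSummable (fun n : ℕ => (n.totient : ℂ)) s := by
    refine LSeriesSummable_of_le_const_mul_rpow (x := 2) (by rw [hre]; linarith) ⟨1, fun n hn => ?_⟩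
    have h21 : ((2:ℝ) - 1) = 1 := by norm_num
    rw [one_mul, Complex.norm_natCast, h21, Real.rpow_one]
    exact_mod_cast Nat.totient_le n
  have h1 : LSeriesSummable 1 s := LSeriesSummable_one_iff.mpr hs
  -- convolution identity: φ ⍟ 1 = id (away from 0)
  have hconv : ∀ {n : ℕ}, n ≠ 0 → (n : ℂ) = ((fun n : ℕ => (n.totient : ℂ)) ⍟ 1) n := by
    intro n hn
    rw [LSeries.convolution_def]
    simp only [Pi.one_apply, mul_one]
    rw [Nat.sum_divisorsAntidiagonal (fun d _ => (d.totient : ℂ))]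
    rw [← Nat.cast_sum]
    rw [Nat.sum_totient]
  have hLid : LSeries (fun n : ℕ => (n : ℂ)) s =
      LSeries (fun n : ℕ => (n.totient : ℂ)) s * riemannZeta s := by
    rw [LSeries_congr hconv s, LSeries_convolution' hφ h1, LSeries_one_eq_riemannZeta hs]
  -- LSeries of id at s equals zeta (s-1)
  have hterm : ∀ n : ℕ, term (fun n : ℕ => (n : ℂ)) s n = term 1 (s - 1) n := by
    intro n
    rcases Nat.eq_zero_or_pos n with rfl | hn
    · simp [term]
    have hn0 : (n : ℂ) ≠ 0 := Nat.cast_ne_zero.mpr hn.ne'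
    rw [term_of_ne_zero hn.ne', term_of_ne_zero hn.ne', Pi.one_apply]
    rw [show s = 1 + (s - 1) by ring, Complex.cpow_add _ _ hn0, Complex.cpow_one]
    have hpow : (n : ℂ) ^ (s - 1) ≠ 0 := by
      intro h
      rw [Complex.cpow_eq_zero_iff] at h
      exact hn0 h.1
    rw [show (1 : ℂ) + (s - 1) - 1 = s - 1 by ring]
    rw [div_eq_div_iff (mul_ne_zero hn0 hpow) hpow]
    ring
  have hz1 : LSeries (fun n : ℕ => (n : ℂ)) s = riemannZeta (s - 1) := by
    rw [show LSeries (fun n : ℕ => (n : ℂ)) s = LSeries 1 (s - 1) from tsum_congr hterm]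
    exact LSeries_one_eq_riemannZeta hs1
  have hC : LSeries (fun n : ℕ => (n.totient : ℂ)) s =
      ((∑' d : ℕ, (d.totient : ℝ) / (d : ℝ) ^ (2 * b) : ℝ) : ℂ) := by
    rw [Complex.ofReal_tsum]
    refine tsum_congr fun n => ?_
    rcases Nat.eq_zero_or_pos n with rfl | hn
    · simp [term]
    rw [term_of_ne_zero hn.ne', hsnat, Complex.cpow_natCast]
    push_cast
    rfl
  rw [show 2 * (b : ℂ) - 1 = s - 1 from rfl, ← hz1, hLid, hC]

lemma gauss_real (N : ℕ) : (∑ m ∈ Finset.Icc 1 N, (m : ℝ)) = N * (N + 1) / 2 := by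
  induction N with
  | zero => simp
  | succ n ih =>
    rw [Finset.sum_Icc_succ_top (by omega)]
    push_cast
    rw [ih]; ring

lemma floor_sq_bound {t : ℝ} (ht : 0 ≤ t) :
    |(⌊t⌋₊ : ℝ) * ((⌊t⌋₊ : ℝ) + 1) / 2 - t ^ 2 / 2| ≤ t / 2 := by
  have hN : (⌊t⌋₊ : ℝ) ≤ t := Nat.floor_le ht
  rcases lt_or_ge t 1 with h1 | h1
  · rw [Nat.floor_eq_zero.mpr h1]
    rw [abs_le]
    constructor <;> nlinarith
  · have h2 : t - 1 < (⌊t⌋₊ : ℝ) := Nat.sub_one_lt_floor t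
    rw [abs_le]
    constructor <;> nlinarith

lemma phi_div_le {b m X : ℕ} (hb : 3 ≤ b) (hX : 1 ≤ X) (hm : X ≤ m) :
    (m.totient : ℝ) / (m : ℝ) ^ (2 * b) ≤ 1 / (X : ℝ) ^ 2 * (1 / (m : ℝ) ^ 2) := by
  have h1m : (1 : ℝ) ≤ (m : ℝ) := by exact_mod_cast hX.trans hm
  have h1X : (1 : ℝ) ≤ (X : ℝ) := by exact_mod_cast hX
  have hXm : (X : ℝ) ≤ (m : ℝ) := by exact_mod_cast hm
  rw [one_div_mul_one_div, div_le_div_iff₀ (by positivity) (by positivity), one_mul]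
  calc (m.totient : ℝ) * ((X : ℝ) ^ 2 * (m : ℝ) ^ 2)
      ≤ (m : ℝ) * ((m : ℝ) ^ 2 * (m : ℝ) ^ 2) := by
        have h := Nat.totient_le m
        have h' : (m.totient : ℝ) ≤ (m : ℝ) := by exact_mod_cast h
        gcongr
    _ = (m : ℝ) ^ 5 := by ring
    _ ≤ (m : ℝ) ^ (2 * b) := pow_le_pow_right₀ h1m (by omega)

lemma tail_bound (b X : ℕ) (hb : 3 ≤ b) (hX : 1 ≤ X) :
    0 ≤ (∑' d : ℕ, (d.totient : ℝ) / (d : ℝ) ^ (2 * b)) -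
        ∑ d ∈ Finset.Icc 1 X, (d.totient : ℝ) / (d : ℝ) ^ (2 * b) ∧
    (∑' d : ℕ, (d.totient : ℝ) / (d : ℝ) ^ (2 * b)) -
        (∑ d ∈ Finset.Icc 1 X, (d.totient : ℝ) / (d : ℝ) ^ (2 * b)) ≤
      (∑' d : ℕ, 1 / (d : ℝ) ^ 2) / (X : ℝ) ^ 2 := by
  set f : ℕ → ℝ := fun d => (d.totient : ℝ) / (d : ℝ) ^ (2 * b) with hf_def
  set g : ℕ → ℝ := fun d => 1 / (d : ℝ) ^ 2 with hg_def
  have hf : Summable f := summable_phi b hb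
  have hg : Summable g := Real.summable_one_div_nat_pow.mpr one_lt_two
  have hgnn : ∀ d, 0 ≤ g d := fun d => by positivity
  have hfnn : ∀ d, 0 ≤ f d := fun d => by positivity
  have hrange : Finset.range (X + 1) = insert 0 (Finset.Icc 1 X) := by
    ext d; simp only [Finset.mem_range, Finset.mem_insert, Finset.mem_Icc]; omega
  have hf0 : f 0 = 0 := by simp [hf_def]
  have hsum_eq : ∑ d ∈ Finset.Icc 1 X, f d = ∑ d ∈ Finset.range (X + 1), f d := by
    rw [hrange, Finset.sum_insert (by simp), hf0, zero_add]
  have htail := Summable.sum_add_tsum_nat_add (f := f) (X + 1) hf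
  have htail_eq : (∑' d : ℕ, f d) - ∑ d ∈ Finset.Icc 1 X, f d = ∑' k, f (k + (X + 1)) := by
    rw [hsum_eq, ← htail]; ring
  have hshift_f : Summable (fun k => f (k + (X + 1))) := (summable_nat_add_iff (X + 1)).mpr hf
  have hshift_g : Summable (fun k => g (k + (X + 1))) := (summable_nat_add_iff (X + 1)).mpr hg
  constructor
  · rw [htail_eq]
    exact tsum_nonneg fun k => hfnn _
  · rw [htail_eq]
    have hle : ∀ k : ℕ, f (k + (X + 1)) ≤ 1 / (X : ℝ) ^ 2 * g (k + (X + 1)) := by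
      intro k
      have : X ≤ k + (X + 1) := by omega
      exact phi_div_le hb hX this
    calc (∑' k, f (k + (X + 1))) ≤ ∑' k, 1 / (X : ℝ) ^ 2 * g (k + (X + 1)) :=
          Summable.tsum_le_tsum hle hshift_f (hshift_g.mul_left _)
      _ = 1 / (X : ℝ) ^ 2 * ∑' k, g (k + (X + 1)) := tsum_mul_left
      _ ≤ 1 / (X : ℝ) ^ 2 * ∑' d, g d := by
          have h1 := Summable.sum_add_tsum_nat_add (f := g) (X + 1) hg
          have h2 : (0:ℝ) ≤ ∑ d ∈ Finset.range (X + 1), g d :=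
            Finset.sum_nonneg fun d _ => hgnn d
          have : (∑' k, g (k + (X + 1))) ≤ ∑' d, g d := by linarith
          gcongr
      _ = (∑' d, g d) / (X : ℝ) ^ 2 := by ring

lemma main_bound (b : ℕ) (hb : 3 ≤ b) : ∃ K : ℝ, ∀ x : ℝ, 2 ≤ x →
    |(∑ n ∈ Finset.Icc 1 ⌊x⌋₊, (hgcd b n : ℝ)) -
      (∑' d : ℕ, (d.totient : ℝ) / (d : ℝ) ^ (2 * b)) / 2 * x ^ 2| ≤ K * x := by
  set C : ℝ := ∑' d : ℕ, (d.totient : ℝ) / (d : ℝ) ^ (2 * b) with hC_def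
  set K1 : ℝ := ∑' d : ℕ, 1 / (d : ℝ) ^ 2 with hK1_def
  have hg : Summable (fun d : ℕ => 1 / (d : ℝ) ^ 2) :=
    Real.summable_one_div_nat_pow.mpr one_lt_two
  have hK1nn : 0 ≤ K1 := tsum_nonneg fun d => by positivity
  refine ⟨2 * K1, fun x hx => ?_⟩
  have hx0 : (0 : ℝ) ≤ x := by linarith
  set X : ℕ := ⌊x⌋₊ with hX_def
  have hX1 : 1 ≤ X := by
    rw [hX_def]
    exact Nat.le_floor (by exact_mod_cast (by linarith : (1:ℝ) ≤ x))
  have hXx : (X : ℝ) ≤ x := Nat.floor_le hx0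
  have hxX1 : x < (X : ℝ) + 1 := Nat.lt_floor_add_one x
  have hX1' : (1 : ℝ) ≤ (X : ℝ) := by exact_mod_cast hX1
  have hx2X : x ≤ 2 * (X : ℝ) := by linarith
  -- Step 1: rewrite the sum
  have e1 : (∑ n ∈ Finset.Icc 1 X, (hgcd b n : ℝ)) =
      ∑ d ∈ Finset.Icc 1 X, (d.totient : ℝ) *
        (((X / d ^ b : ℕ) : ℝ) * (((X / d ^ b : ℕ) : ℝ) + 1) / 2) := by
    have := summatory_eq b X (by omega)
    calc (∑ n ∈ Finset.Icc 1 X, (hgcd b n : ℝ))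
        = ((∑ n ∈ Finset.Icc 1 X, hgcd b n : ℕ) : ℝ) := by push_cast; rfl
      _ = ((∑ d ∈ Finset.Icc 1 X, d.totient * (∑ m ∈ Finset.Icc 1 (X / d ^ b), m) : ℕ) : ℝ) := by
          rw [this]
      _ = ∑ d ∈ Finset.Icc 1 X, (d.totient : ℝ) * (∑ m ∈ Finset.Icc 1 (X / d ^ b), (m : ℝ)) := by
          push_cast; rfl
      _ = _ := by
          refine Finset.sum_congr rfl fun d hd => ?_
          rw [gauss_real]
  -- per-term estimate
  have key : ∀ d ∈ Finset.Icc 1 X,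
      |(d.totient : ℝ) * (((X / d ^ b : ℕ) : ℝ) * (((X / d ^ b : ℕ) : ℝ) + 1) / 2)
        - x ^ 2 / 2 * ((d.totient : ℝ) / (d : ℝ) ^ (2 * b))| ≤ x / 2 * (1 / (d : ℝ) ^ 2) := by
    intro d hd
    rw [Finset.mem_Icc] at hd
    have hd1 : 1 ≤ d := hd.1
    have hd1' : (1 : ℝ) ≤ (d : ℝ) := by exact_mod_cast hd1
    have hdb : (0 : ℝ) < (d : ℝ) ^ b := by positivity
    set t : ℝ := x / (d : ℝ) ^ b with ht_def
    have ht0 : 0 ≤ t := by positivity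
    have hfloor : (X / d ^ b : ℕ) = ⌊t⌋₊ := by
      rw [ht_def, hX_def]
      rw [← Nat.floor_div_natCast x (d ^ b)]
      push_cast
      rfl
    have ht2 : t ^ 2 = x ^ 2 / (d : ℝ) ^ (2 * b) := by
      rw [ht_def, div_pow, ← pow_mul, mul_comm b 2]
    have habs := floor_sq_bound ht0
    rw [← hfloor] at habs
    have heq : x ^ 2 / 2 * ((d.totient : ℝ) / (d : ℝ) ^ (2 * b)) =
        (d.totient : ℝ) * (t ^ 2 / 2) := by
      rw [ht2]; ring
    rw [heq, ← mul_sub, abs_mul, _root_.abs_of_nonneg (by positivity : (0:ℝ) ≤ (d.totient : ℝ))]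
    have hphi : (d.totient : ℝ) / (d : ℝ) ^ b ≤ 1 / (d : ℝ) ^ 2 := by
      rw [div_le_div_iff₀ (by positivity) (by positivity), one_mul]
      have h' : (d.totient : ℝ) ≤ (d : ℝ) := by exact_mod_cast Nat.totient_le d
      calc (d.totient : ℝ) * (d : ℝ) ^ 2 ≤ (d : ℝ) * (d : ℝ) ^ 2 := by gcongr
        _ = (d : ℝ) ^ 3 := by ring
        _ ≤ (d : ℝ) ^ b := pow_le_pow_right₀ hd1' (by omega)
    calc (d.totient : ℝ) * |((X / d ^ b : ℕ) : ℝ) * (((X / d ^ b : ℕ) : ℝ) + 1) / 2 - t ^ 2 / 2|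
        ≤ (d.totient : ℝ) * (t / 2) := by
          apply mul_le_mul_of_nonneg_left habs (by positivity)
      _ = x / 2 * ((d.totient : ℝ) / (d : ℝ) ^ b) := by rw [ht_def]; ring
      _ ≤ x / 2 * (1 / (d : ℝ) ^ 2) := by
          apply mul_le_mul_of_nonneg_left hphi (by linarith)
  -- Step 2 : sum of per-term errors
  have e2 : |∑ d ∈ Finset.Icc 1 X, ((d.totient : ℝ) *
        (((X / d ^ b : ℕ) : ℝ) * (((X / d ^ b : ℕ) : ℝ) + 1) / 2)
        - x ^ 2 / 2 * ((d.totient : ℝ) / (d : ℝ) ^ (2 * b)))| ≤ x / 2 * K1 := by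
    calc |∑ d ∈ Finset.Icc 1 X, ((d.totient : ℝ) *
          (((X / d ^ b : ℕ) : ℝ) * (((X / d ^ b : ℕ) : ℝ) + 1) / 2)
          - x ^ 2 / 2 * ((d.totient : ℝ) / (d : ℝ) ^ (2 * b)))|
        ≤ ∑ d ∈ Finset.Icc 1 X, |(d.totient : ℝ) *
          (((X / d ^ b : ℕ) : ℝ) * (((X / d ^ b : ℕ) : ℝ) + 1) / 2)
          - x ^ 2 / 2 * ((d.totient : ℝ) / (d : ℝ) ^ (2 * b))| :=
          Finset.abs_sum_le_sum_abs _ _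
      _ ≤ ∑ d ∈ Finset.Icc 1 X, x / 2 * (1 / (d : ℝ) ^ 2) := Finset.sum_le_sum key
      _ = x / 2 * ∑ d ∈ Finset.Icc 1 X, (1 / (d : ℝ) ^ 2) := by rw [Finset.mul_sum]
      _ ≤ x / 2 * K1 := by
          apply mul_le_mul_of_nonneg_left _ (by linarith)
          exact Summable.sum_le_tsum _ (fun d _ => by positivity) hg
  -- Step 3 : tail
  obtain ⟨ht1, ht2⟩ := tail_bound b X hb hX1
  have e3 : |x ^ 2 / 2 * ((∑ d ∈ Finset.Icc 1 X, (d.totient : ℝ) / (d : ℝ) ^ (2 * b)) - C)|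
      ≤ 2 * K1 := by
    rw [abs_mul, _root_.abs_of_nonneg (by positivity : (0:ℝ) ≤ x ^ 2 / 2), abs_sub_comm,
      _root_.abs_of_nonneg ht1]
    calc x ^ 2 / 2 * (C - ∑ d ∈ Finset.Icc 1 X, (d.totient : ℝ) / (d : ℝ) ^ (2 * b))
        ≤ x ^ 2 / 2 * (K1 / (X : ℝ) ^ 2) := by
          apply mul_le_mul_of_nonneg_left ht2 (by positivity)
      _ ≤ (2 * (X : ℝ)) ^ 2 / 2 * (K1 / (X : ℝ) ^ 2) := by
          apply mul_le_mul_of_nonneg_right _ (by positivity)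
          gcongr
      _ = 2 * K1 := by
          field_simp
  -- combine
  have decomp : (∑ n ∈ Finset.Icc 1 X, (hgcd b n : ℝ)) - C / 2 * x ^ 2 =
      (∑ d ∈ Finset.Icc 1 X, ((d.totient : ℝ) *
        (((X / d ^ b : ℕ) : ℝ) * (((X / d ^ b : ℕ) : ℝ) + 1) / 2)
        - x ^ 2 / 2 * ((d.totient : ℝ) / (d : ℝ) ^ (2 * b))))
      + x ^ 2 / 2 * ((∑ d ∈ Finset.Icc 1 X, (d.totient : ℝ) / (d : ℝ) ^ (2 * b)) - C) := by
    rw [e1, Finset.sum_sub_distrib, ← Finset.mul_sum]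
    ring
  rw [decomp]
  calc |_ + _| ≤ _ + _ := abs_add_le _ _
    _ ≤ x / 2 * K1 + 2 * K1 := add_le_add e2 e3
    _ ≤ 2 * K1 * x := by nlinarith

theorem hgcd_summatory (b : ℕ) (hb : 3 ≤ b) :
    (fun x : ℝ => (∑ n ∈ Finset.Icc 1 ⌊x⌋₊, (hgcd b n : ℂ)) -
        riemannZeta (2 * b - 1) / (2 * riemannZeta (2 * b)) * (x : ℂ) ^ 2)
      =O[Filter.atTop] (fun x : ℝ => x) := by
  set C : ℝ := ∑' d : ℕ, (d.totient : ℝ) / (d : ℝ) ^ (2 * b) with hC_def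
  have hzne : riemannZeta (2 * (b : ℂ)) ≠ 0 := by
    apply riemannZeta_ne_zero_of_one_lt_re
    have hre2 : (2 * (b : ℂ)).re = 2 * (b : ℝ) := by simp
    rw [hre2]
    have : (3 : ℝ) ≤ (b : ℝ) := by exact_mod_cast hb
    linarith
  have hconst : riemannZeta (2 * b - 1) / (2 * riemannZeta (2 * b)) = ((C / 2 : ℝ) : ℂ) := by
    rw [key_zeta b hb]
    rw [mul_comm (2:ℂ) (riemannZeta _), ← div_div, mul_div_cancel_right₀ _ hzne]
    simp only [Complex.ofReal_div, Complex.ofReal_ofNat]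
    rfl
  obtain ⟨K, hK⟩ := main_bound b hb
  rw [Asymptotics.isBigO_iff]
  refine ⟨K, Filter.eventually_atTop.mpr ⟨2, fun x hx => ?_⟩⟩
  have hsum : (∑ n ∈ Finset.Icc 1 ⌊x⌋₊, (hgcd b n : ℂ)) =
      ((∑ n ∈ Finset.Icc 1 ⌊x⌋₊, (hgcd b n : ℝ) : ℝ) : ℂ) := by
    push_cast
    rfl
  rw [hsum, hconst]
  have heq : ((∑ n ∈ Finset.Icc 1 ⌊x⌋₊, (hgcd b n : ℝ) : ℝ) : ℂ) -
      ((C / 2 : ℝ) : ℂ) * (x : ℂ) ^ 2 =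
      (((∑ n ∈ Finset.Icc 1 ⌊x⌋₊, (hgcd b n : ℝ)) - C / 2 * x ^ 2 : ℝ) : ℂ) := by
    push_cast
    ring
  rw [heq, Complex.norm_real]
  rw [Real.norm_eq_abs, Real.norm_eq_abs, _root_.abs_of_nonneg (by linarith : (0:ℝ) ≤ x)]
  exact (hK x hx).trans_eq rfl
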